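/- Let b = (b_0, b_1, ...) be a sequence of integers. For n ≥ 2, the 3-dimensional 4-bounded semisymmetric weighted Catalan numbers satisfy the linear recurrence A_n = (b_0 + 3b_2)·A_{n-1} + b_0·b_2·A_{n-2}, with initial conditions A_0 = 1 and A_1 = b_0, where A_n denotes the sum over all 3-dimensional balanced ballot paths P of length 3n with semisymmetric height at most 4 of the product of b_{u_i} over semisymmetric up-steps of P, with u_i the semisymmetric height of the starting point of the ith up-step. -/

import Mathlib

open scoped Classical

/-- Number of steps among the first `i` steps of `P` equal to basis vector `j`. -/
def cnt (k n : ℕ) (P : Fin (k*n) → Fin k) (j : Fin k) (i : ℕ) : ℕ :=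
  (Finset.univ.filter (fun t : Fin (k*n) => (t : ℕ) < i ∧ P t = j)).card

/-- `P` is a `k`-dimensional balanced ballot path of length `k*n`:
each basis vector appears exactly `n` times, and every partial sum is
weakly decreasing in coordinates. -/
def IsBBP (k n : ℕ) (P : Fin (k*n) → Fin k) : Prop :=
  (∀ j : Fin k, cnt k n P j (k*n) = n) ∧
  (∀ i ≤ k*n, ∀ j j' : Fin k, j ≤ j' → cnt k n P j' i ≤ cnt k n P j i)

/-- Semisymmetric height `g_k` of the `i`-th intermediate point of `P`. -/
def ptHt (k n : ℕ) (P : Fin (k*n) → Fin k) (i : ℕ) : ℤ :=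
  ∑ j : Fin k, ((k : ℤ) - 1 - 2*(j : ℕ)) * (cnt k n P j i)

/-- The semisymmetric height of path `P` is at most `u`. -/
def HeightLE (k n : ℕ) (P : Fin (k*n) → Fin k) (u : ℤ) : Prop :=
  ∀ i ≤ k*n, ptHt k n P i ≤ u

/-- The semisymmetric height of path `P` is exactly `u`. -/
def HeightEq (k n : ℕ) (P : Fin (k*n) → Fin k) (u : ℤ) : Prop :=
  HeightLE k n P u ∧ ∃ i ≤ k*n, ptHt k n P i = u

/-- Weight of a 3-dimensional path w.r.t. `b`: product over up-steps (steps equal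
to `e_1`) of `b` evaluated at the semisymmetric height of the starting point. -/
noncomputable def wt3 (n : ℕ) (b : ℕ → ℤ) (P : Fin (3*n) → Fin 3) : ℤ :=
  ∏ t : Fin (3*n), if (P t : ℕ) = 0 then b (ptHt 3 n P (t : ℕ)).toNat else 1

/-- The `n`th 3-dimensional 4-bounded semisymmetric weighted Catalan number. -/
noncomputable def A3 (b : ℕ → ℤ) (n : ℕ) : ℤ :=
  ∑ P : Fin (3*n) → Fin 3,
    if IsBBP 3 n P ∧ HeightLE 3 n P 4 then wt3 n b P else 0

def good (s : ℤ × ℤ) : Prop := 0 ≤ s.1 ∧ 0 ≤ s.2 ∧ s.1 + s.2 ≤ 2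

instance : DecidablePred good := fun s => by unfold good; infer_instance

def nxtS (s : ℤ × ℤ) (a : Fin 3) : ℤ × ℤ :=
  if a = 0 then (s.1+1, s.2) else if a = 1 then (s.1-1, s.2+1) else (s.1, s.2-1)

noncomputable def wS (b : ℕ → ℤ) (s : ℤ × ℤ) (a : Fin 3) : ℤ :=
  if a = 0 then (if s.1 + s.2 ≤ 1 then b (2*(s.1+s.2)).toNat else 0)
  else if a = 1 then (if 1 ≤ s.1 then 1 else 0)
  else (if 1 ≤ s.2 then 1 else 0)

noncomputable def F (b : ℕ → ℤ) (s : ℤ × ℤ) : List (Fin 3) → ℤ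
  | [] => if s = (0,0) then 1 else 0
  | a :: l => wS b s a * F b (nxtS s a) l

def st (s : ℤ × ℤ) : List (Fin 3) → ℤ × ℤ
  | [] => s
  | a :: l => st (nxtS s a) l

def allGood (s : ℤ × ℤ) : List (Fin 3) → Prop
  | [] => good s
  | a :: l => good s ∧ allGood (nxtS s a) l

noncomputable def wtP (b : ℕ → ℤ) (s : ℤ × ℤ) : List (Fin 3) → ℤ
  | [] => 1
  | a :: l => (if a = 0 then b (2*(s.1+s.2)).toNat else 1) * wtP b (nxtS s a) l

lemma wS_of_good {b s a} (h : good s) (h' : good (nxtS s a)) :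
    wS b s a = if a = 0 then b (2*(s.1+s.2)).toNat else 1 := by
  fin_cases a <;> simp [wS, nxtS, good] at h h' ⊢ <;> omega

lemma wS_of_bad {b s a} (h : good s) (h' : ¬ good (nxtS s a)) : wS b s a = 0 := by
  fin_cases a <;> simp [wS, nxtS, good] at h h' ⊢ <;> omega

lemma allGood_good {s} : ∀ {l : List (Fin 3)}, allGood s l → good s
  | [], h => h
  | _ :: _, h => h.1

lemma charF (b : ℕ → ℤ) : ∀ (l : List (Fin 3)) (s : ℤ × ℤ), good s →
    F b s l = if allGood s l ∧ st s l = (0,0) then wtP b s l else 0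
  | [], s, hs => by simp [F, st, allGood, wtP, hs]
  | a :: l, s, hs => by
    by_cases h' : good (nxtS s a)
    · rw [F, charF b l _ h', wS_of_good hs h']
      simp only [allGood, st, wtP, hs, true_and]
      split <;> split <;> ring_nf <;> tauto
    · rw [F, wS_of_bad hs h']
      simp only [allGood, st, wtP]
      simp [show ¬ allGood (nxtS s a) l from fun h => h' (allGood_good h)]

noncomputable def G (b : ℕ → ℤ) (s : ℤ × ℤ) (m : ℕ) : ℤ :=
  ∑ P : Fin m → Fin 3, F b s (List.ofFn P)

lemma G_zero (b s) : G b s 0 = if s = (0,0) then 1 else 0 := by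
  rw [G, Fintype.sum_eq_single (fun i : Fin 0 => i.elim0)]
  · simp [F]
  · intro P h; exact absurd (funext fun i => i.elim0) h

lemma G_succ (b s m) : G b s (m+1) = ∑ a : Fin 3, wS b s a * G b (nxtS s a) m := by
  rw [G, ← (Fin.consEquiv (fun _ : Fin (m+1) => Fin 3)).sum_comp
    (fun P => F b s (List.ofFn P))]
  rw [Fintype.sum_prod_type]
  refine Finset.sum_congr rfl fun a _ => ?_
  rw [G, Finset.mul_sum]
  refine Finset.sum_congr rfl fun P _ => ?_
  have : List.ofFn (Fin.consEquiv (fun _ : Fin (m+1) => Fin 3) (a, P)) = a :: List.ofFn P := by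
    simp [Fin.consEquiv, List.ofFn_succ]
  rw [this, F]

lemma Gstep (b m) (s : ℤ × ℤ) : G b s (m+1) =
    wS b s 0 * G b (s.1+1, s.2) m + wS b s 1 * G b (s.1-1, s.2+1) m
      + wS b s 2 * G b (s.1, s.2-1) m := by
  rw [G_succ, Fin.sum_univ_three]
  norm_num [nxtS, show (2:Fin 3) ≠ 0 by decide, show (2:Fin 3) ≠ 1 by decide,
    show (1:Fin 3) ≠ 0 by decide]

lemma G3_00 (b m) : G b (0,0) (m+3) =
    b 0 * G b (0,0) m + (2 * (b 0 * b 2)) * G b (1,1) m := by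
  have h2 : ((2:ℤ).toNat) = 2 := rfl
  simp only [Gstep, wS, show (2:Fin 3) ≠ 0 by decide, show (2:Fin 3) ≠ 1 by decide,
    show (1:Fin 3) ≠ 0 by decide, if_true, if_false, eq_self_iff_true, h2]
  norm_num
  rw [show Int.toNat (@OfNat.ofNat ℤ 2 (@instOfNat 2)) = 2 from rfl]
  ring

lemma G3_11 (b m) : G b (1,1) (m+3) =
    2 * G b (0,0) m + (3 * b 2) * G b (1,1) m := by
  have h2 : ((2:ℤ).toNat) = 2 := rfl
  simp only [Gstep, wS, show (2:Fin 3) ≠ 0 by decide, show (2:Fin 3) ≠ 1 by decide,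
    show (1:Fin 3) ≠ 0 by decide, if_true, if_false, eq_self_iff_true, h2]
  norm_num
  rw [show Int.toNat (@OfNat.ofNat ℤ 2 (@instOfNat 2)) = 2 from rfl]
  ring

lemma cnt_succ (k n : ℕ) (P : Fin (k*n) → Fin k) (j : Fin k) (i : ℕ) :
    cnt k n P j (i+1) = cnt k n P j i +
      if h : i < k*n then (if P ⟨i,h⟩ = j then 1 else 0) else 0 := by
  by_cases h : i < k*n
  · rw [dif_pos h, cnt, cnt]
    rw [show (Finset.univ.filter fun t : Fin (k*n) => (t:ℕ) < i+1 ∧ P t = j)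
        = (Finset.univ.filter fun t : Fin (k*n) => (t:ℕ) < i ∧ P t = j)
          ∪ (Finset.univ.filter fun t : Fin (k*n) => t = ⟨i,h⟩ ∧ P t = j) from by
      ext t
      simp only [Finset.mem_filter, Finset.mem_union, Finset.mem_univ, true_and, Fin.ext_iff]
      constructor
      · rintro ⟨ht, hp⟩
        rcases Nat.lt_succ_iff_lt_or_eq.mp ht with h' | h'
        · exact Or.inl ⟨h', hp⟩
        · exact Or.inr ⟨h', hp⟩
      · rintro (⟨ht, hp⟩ | ⟨ht, hp⟩) <;> exact ⟨by omega, hp⟩]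
    rw [Finset.card_union_of_disjoint (by
      rw [Finset.disjoint_filter]
      rintro t _ ⟨ht, _⟩
      simp only [Fin.ext_iff, not_and]
      intro h'; omega)]
    congr 1
    by_cases hp : P ⟨i,h⟩ = j
    · rw [if_pos hp]
      rw [show (Finset.univ.filter fun t : Fin (k*n) => t = ⟨i,h⟩ ∧ P t = j) = {⟨i,h⟩} from by
        ext t; simp only [Finset.mem_filter, Finset.mem_univ, true_and, Finset.mem_singleton]
        constructor
        · rintro ⟨ht, _⟩; exact ht
        · rintro rfl; exact ⟨rfl, hp⟩]
      simp
    · rw [if_neg hp]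
      rw [Finset.card_eq_zero, Finset.filter_eq_empty_iff]
      rintro t _ ⟨rfl, hp'⟩
      exact hp hp'
  · rw [dif_neg h, add_zero, cnt, cnt]
    congr 1
    ext t
    have := t.isLt
    simp only [Finset.mem_filter]
    constructor
    · rintro ⟨_, ht, hp⟩; exact ⟨by simp, by omega, hp⟩
    · rintro ⟨_, ht, hp⟩; exact ⟨by simp, by omega, hp⟩

lemma count_take_eq_cnt (k n : ℕ) (P : Fin (k*n) → Fin k) (j : Fin k) :
    ∀ i, ((List.ofFn P).take i).count j = cnt k n P j i := by
  intro i
  induction i with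
  | zero => simp [cnt]
  | succ i ih =>
    rw [List.take_succ, List.count_append, ih, cnt_succ]
    congr 1
    by_cases h : i < k*n
    · rw [dif_pos h]
      have : (List.ofFn P)[i]? = some (P ⟨i,h⟩) := by
        rw [List.getElem?_eq_getElem (by simpa using h)]
        simp
      rw [this]
      by_cases hp : P ⟨i,h⟩ = j <;> simp [hp, List.count_cons, Option.toList]
    · rw [dif_neg h]
      have : (List.ofFn P)[i]? = none := by
        rw [List.getElem?_eq_none]
        simpa using h
      rw [this]
      simp [Option.toList]

lemma st_eq : ∀ (l : List (Fin 3)) (s : ℤ × ℤ),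
    st s l = (s.1 + l.count 0 - l.count 1, s.2 + l.count 1 - l.count 2)
  | [], s => by simp [st]
  | a :: l, s => by
    rw [st, st_eq l]
    fin_cases a <;>
      simp [nxtS, List.count_cons, show (2:Fin 3) ≠ 0 by decide, show (2:Fin 3) ≠ 1 by decide,
        show (1:Fin 3) ≠ 0 by decide, show (0:Fin 3) ≠ 1 by decide, show (0:Fin 3) ≠ 2 by decide,
        show (1:Fin 3) ≠ 2 by decide, Prod.ext_iff] <;>
      (try constructor) <;> push_cast <;> ring

lemma allGood_iff : ∀ (l : List (Fin 3)) (s : ℤ × ℤ),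
    allGood s l ↔ ∀ i ≤ l.length, good (st s (l.take i))
  | [], s => by
    simp only [allGood, List.length_nil, Nat.le_zero]
    constructor
    · rintro h i rfl; simpa [st] using h
    · intro h; simpa [st] using h 0 rfl
  | a :: l, s => by
    rw [allGood, allGood_iff l]
    constructor
    · rintro ⟨h0, h⟩ i hi
      cases i with
      | zero => simpa [st] using h0
      | succ i =>
        rw [List.take_succ_cons, st]
        exact h i (by simpa using hi)
    · intro h
      refine ⟨by simpa [st] using h 0 (by simp), fun i hi => ?_⟩
      have := h (i+1) (by simpa using hi)
      rwa [List.take_succ_cons, st] at this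

lemma st_take (n : ℕ) (P : Fin (3*n) → Fin 3) (i : ℕ) :
    st (0,0) ((List.ofFn P).take i)
      = ((cnt 3 n P 0 i : ℤ) - (cnt 3 n P 1 i : ℤ), (cnt 3 n P 1 i : ℤ) - (cnt 3 n P 2 i : ℤ)) := by
  rw [st_eq]
  simp only [count_take_eq_cnt]
  simp

lemma ptHt_eq (n : ℕ) (P : Fin (3*n) → Fin 3) (i : ℕ) :
    ptHt 3 n P i = 2*(cnt 3 n P 0 i : ℤ) - 2*(cnt 3 n P 2 i : ℤ) := by
  rw [ptHt, Fin.sum_univ_three]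
  norm_num
  ring

lemma wtP_ofFn (b : ℕ → ℤ) : ∀ (m : ℕ) (P : Fin m → Fin 3) (s : ℤ × ℤ),
    wtP b s (List.ofFn P) = ∏ t : Fin m,
      (if P t = 0 then
        b (2*((st s ((List.ofFn P).take t)).1 + (st s ((List.ofFn P).take t)).2)).toNat else 1)
  | 0, P, s => by simp [wtP]
  | m+1, P, s => by
    rw [List.ofFn_succ, wtP, wtP_ofFn b m (fun t => P t.succ) (nxtS s (P 0)),
      Fin.prod_univ_succ]
    congr 1
    all_goals try simp [st]
    all_goals refine Finset.prod_congr rfl fun t _ => ?_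
    all_goals simp only [List.ofFn_succ, Fin.val_succ, List.take_succ_cons, st]

lemma total_cnt (n : ℕ) (P : Fin (3*n) → Fin 3) :
    cnt 3 n P 0 (3*n) + cnt 3 n P 1 (3*n) + cnt 3 n P 2 (3*n) = 3*n := by
  have hcnt : ∀ j : Fin 3, cnt 3 n P j (3*n)
      = (Finset.univ.filter fun t : Fin (3*n) => P t = j).card := by
    intro j
    rw [cnt]
    congr 1
    ext t
    simp [t.isLt]
  rw [hcnt, hcnt, hcnt]
  have := Finset.card_eq_sum_card_fiberwise
    (f := P) (s := Finset.univ) (t := (Finset.univ : Finset (Fin 3)))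
    (fun t _ => Finset.mem_univ (P t))
  simp only [Finset.card_univ, Fintype.card_fin] at this
  rw [Fin.sum_univ_three] at this
  omega

lemma cond_iff (n : ℕ) (P : Fin (3*n) → Fin 3) :
    (IsBBP 3 n P ∧ HeightLE 3 n P 4)
      ↔ (allGood (0,0) (List.ofFn P) ∧ st (0,0) (List.ofFn P) = (0,0)) := by
  rw [allGood_iff]
  have hlen : (List.ofFn P).length = 3*n := by simp
  have hfull : (List.ofFn P).take (3*n) = List.ofFn P :=
    List.take_of_length_le (by simp)
  constructor
  · rintro ⟨⟨hend, hmono⟩, hht⟩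
    constructor
    · intro i hi
      rw [hlen] at hi
      rw [st_take]
      have h01 := hmono i hi 0 1 (by decide)
      have h12 := hmono i hi 1 2 (by decide)
      have hh := hht i hi
      rw [ptHt_eq] at hh
      refine ⟨by simp; omega, by simp; omega, by simp; omega⟩
    · rw [← hfull, st_take]
      rw [hend 0, hend 1, hend 2]
      simp
  · rintro ⟨hgood, hst⟩
    have hG : ∀ i ≤ 3*n, (cnt 3 n P 1 i : ℤ) ≤ cnt 3 n P 0 i
        ∧ (cnt 3 n P 2 i : ℤ) ≤ cnt 3 n P 1 i
        ∧ (cnt 3 n P 0 i : ℤ) - cnt 3 n P 2 i ≤ 2 := by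
      intro i hi
      have := hgood i (by omega)
      rw [st_take] at this
      obtain ⟨h1, h2, h3⟩ := this
      simp only at h1 h2 h3
      exact ⟨by omega, by omega, by omega⟩
    have hendeq : cnt 3 n P 0 (3*n) = cnt 3 n P 1 (3*n)
        ∧ cnt 3 n P 1 (3*n) = cnt 3 n P 2 (3*n) := by
      rw [← hfull, st_take] at hst
      rw [Prod.ext_iff] at hst
      simp only at hst
      obtain ⟨h1, h2⟩ := hst
      constructor <;> omega
    have htot := total_cnt n P
    refine ⟨⟨?_, ?_⟩, ?_⟩
    · intro j
      fin_cases j <;> simp <;> omega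
    · intro i hi j j' hjj'
      obtain ⟨h1, h2, _⟩ := hG i hi
      fin_cases j <;> fin_cases j' <;> simp at hjj' ⊢ <;> omega
    · intro i hi
      obtain ⟨_, _, h3⟩ := hG i hi
      rw [ptHt_eq]
      omega

lemma wt3_eq (n : ℕ) (b : ℕ → ℤ) (P : Fin (3*n) → Fin 3) :
    wt3 n b P = wtP b (0,0) (List.ofFn P) := by
  rw [wtP_ofFn, wt3]
  refine Finset.prod_congr rfl fun t _ => ?_
  have hv : ((P t : ℕ) = 0) ↔ P t = 0 := by
    rw [Fin.ext_iff]; simp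
  rw [st_take, ptHt_eq]
  simp only [hv]
  congr 2
  ring

lemma A3_eq_G (b : ℕ → ℤ) (n : ℕ) : A3 b n = G b (0,0) (3*n) := by
  rw [A3, G]
  refine Finset.sum_congr rfl fun P _ => ?_
  rw [charF b _ _ (by simp [good])]
  exact if_congr (cond_iff n P) (wt3_eq n b P) rfl

theorem stmt7 (b : ℕ → ℤ) :
    A3 b 0 = 1 ∧ A3 b 1 = b 0 ∧
    ∀ n : ℕ, A3 b (n+2) = (b 0 + 3 * b 2) * A3 b (n+1) + b 0 * b 2 * A3 b n := by
  have hx0 : G b (0,0) 0 = 1 := by rw [G_zero]; simp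
  have hy0 : G b (1,1) 0 = 0 := by rw [G_zero]; norm_num
  refine ⟨by rw [A3_eq_G]; simpa using hx0, ?_, ?_⟩
  · rw [A3_eq_G]
    have : 3*1 = 0+3 := rfl
    rw [this, G3_00, hx0, hy0]
    ring
  · intro n
    set x : ℕ → ℤ := fun m => G b (0,0) (3*m) with hxdef
    set y : ℕ → ℤ := fun m => G b (1,1) (3*m) with hydef
    have h3 : ∀ m : ℕ, 3*(m+1) = 3*m+3 := fun m => by ring
    have hx : ∀ m : ℕ, x (m+1) = b 0 * x m + (2*(b 0 * b 2)) * y m := by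
      intro m; simp only [hxdef, hydef, h3 m]; exact G3_00 b (3*m)
    have hy : ∀ m : ℕ, y (m+1) = 2 * x m + (3 * b 2) * y m := by
      intro m; simp only [hxdef, hydef, h3 m]; exact G3_11 b (3*m)
    rw [A3_eq_G, A3_eq_G, A3_eq_G]
    show x (n+2) = (b 0 + 3 * b 2) * x (n+1) + b 0 * b 2 * x n
    linear_combination hx (n+1) + 2*(b 0 * b 2) * hy n - 3 * b 2 * hx n
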